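/- There exists a unique multilinear symmetric map sgn : (ℤ^n)^(n+1) → ℤ/2ℤ such that for all l₁,…,lₙ ∈ ℤ^n one has sgn(l₁,l₁,l₂,…,lₙ) ≡ det(l₁,l₂,…,lₙ) (mod 2). -/

import Mathlib

open Finset

lemma zmod2_mul_self (x : ZMod 2) : x * x = x := by revert x; decide

lemma zmod2_add_self (x : ZMod 2) : x + x = 0 := by revert x; decide

lemma cancel {n : ℕ} (g : Fin n → Fin n) (hg : ¬ Function.Surjective g) (c : ZMod 2) :
    ∑ T : Finset (Fin n), (if ∀ i, g i ∈ T then c else 0) = 0 := by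
  obtain ⟨m, hm⟩ : ∃ m, ∀ i, g i ≠ m := by
    simpa [Function.Surjective, eq_comm] using hg
  refine Finset.sum_ninvolution (fun T => symmDiff T {m}) ?_ ?_ ?_ ?_
  · intro T
    have h2 : (∀ i, g i ∈ T) ↔ (∀ i, g i ∈ symmDiff T {m}) := by
      apply forall_congr'
      intro i
      simp [Finset.mem_symmDiff, hm i]
    by_cases h : ∀ i, g i ∈ T
    · rw [if_pos h, if_pos (h2.mp h), zmod2_add_self]
    · rw [if_neg h, if_neg (fun h' => h (h2.mpr h'))]; simp
  · intro T _ h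
    have := Finset.ext_iff.mp h m
    simp [Finset.mem_symmDiff] at this
  · intro T; exact Finset.mem_univ _
  · intro T; exact symmDiff_symmDiff_cancel_right _ _

lemma sign_cast {n : ℕ} (σ : Equiv.Perm (Fin n)) : ((Equiv.Perm.sign σ : ℤ) : ZMod 2) = 1 := by
  rcases Int.units_eq_one_or (Equiv.Perm.sign σ) with h | h <;> rw [h] <;> decide

lemma core {n : ℕ} (A : Fin n → Fin n → ZMod 2) :
    ∑ T : Finset (Fin n), ∏ i, (∑ k ∈ T, A i k) = (Matrix.of fun i j => A j i).det := by
  have h1 : ∀ T : Finset (Fin n), ∏ i, (∑ k ∈ T, A i k)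
      = ∑ g : Fin n → Fin n, (if ∀ i, g i ∈ T then ∏ i, A i (g i) else 0) := by
    intro T
    rw [Finset.prod_univ_sum (fun _ => T) (fun i k => A i k)]
    rw [← Finset.sum_filter]
    apply Finset.sum_congr _ (fun _ _ => rfl)
    ext g
    simp [Fintype.mem_piFinset]
  simp_rw [h1]
  rw [Finset.sum_comm]
  have h2 : ∀ g : Fin n → Fin n,
      ∑ T : Finset (Fin n), (if ∀ i, g i ∈ T then ∏ i, A i (g i) else 0)
      = if Function.Surjective g then ∏ i, A i (g i) else 0 := by
    intro g
    by_cases hg : Function.Surjective g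
    · rw [if_pos hg]
      rw [Finset.sum_eq_single Finset.univ]
      · simp
      · intro T _ hT
        rw [if_neg]
        intro h
        apply hT
        rw [Finset.eq_univ_iff_forall]
        intro m
        obtain ⟨i, rfl⟩ := hg m
        exact h i
      · simp
    · rw [if_neg hg]; exact cancel g hg _
  simp_rw [h2]
  rw [← Finset.sum_filter]
  rw [Matrix.det_apply']
  refine (Finset.sum_bij (fun (σ : Equiv.Perm (Fin n)) _ => ⇑σ) ?_ ?_ ?_ ?_).symm
  · intro σ _
    simp [σ.surjective]
  · intro a _ b _ h
    exact Equiv.coe_fn_injective h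
  · intro g hg
    simp only [Finset.mem_filter, Finset.mem_univ, true_and] at hg
    have hb : Function.Bijective g := Finite.surjective_iff_bijective.mp hg
    exact ⟨Equiv.ofBijective g hb, Finset.mem_univ _, rfl⟩
  · intro σ _
    rw [sign_cast, one_mul]
    rfl

def S (n : ℕ) (v : Fin (n + 1) → Fin n → ℤ) : ZMod 2 :=
  ∑ T : Finset (Fin n), ∏ i : Fin (n + 1), ((∑ k ∈ T, v i k : ℤ) : ZMod 2)

lemma S_add (n : ℕ) (v : Fin (n + 1) → Fin n → ℤ) (i : Fin (n + 1)) (x y : Fin n → ℤ) :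
    S n (Function.update v i (x + y)) = S n (Function.update v i x) + S n (Function.update v i y) := by
  have key : ∀ (z : Fin n → ℤ) (T : Finset (Fin n)),
      ∏ i' : Fin (n + 1), ((∑ k ∈ T, Function.update v i z i' k : ℤ) : ZMod 2)
        = ((∑ k ∈ T, z k : ℤ) : ZMod 2) *
          ∏ i' ∈ Finset.univ.erase i, ((∑ k ∈ T, v i' k : ℤ) : ZMod 2) := by
    intro z T
    rw [← Finset.mul_prod_erase Finset.univ _ (Finset.mem_univ i), Function.update_self]
    congr 1
    refine Finset.prod_congr rfl fun i' hi' => ?_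
    rw [Function.update_of_ne (Finset.ne_of_mem_erase hi')]
  unfold S
  simp_rw [key]
  rw [← Finset.sum_add_distrib]
  refine Finset.sum_congr rfl fun T _ => ?_
  rw [← add_mul]
  congr 1
  push_cast
  simp [Finset.sum_add_distrib]

lemma S_symm (n : ℕ) (v : Fin (n + 1) → Fin n → ℤ) (σ : Equiv.Perm (Fin (n + 1))) :
    S n (v ∘ σ) = S n v := by
  unfold S
  refine Finset.sum_congr rfl fun T _ => ?_
  exact Equiv.prod_comp σ fun i => ((∑ k ∈ T, v i k : ℤ) : ZMod 2)

lemma S_det (n : ℕ) (hn : 1 ≤ n) (l : Fin n → Fin n → ℤ) :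
    S n (Fin.cons (l ⟨0, hn⟩) l) = (((Matrix.of fun i j => l j i).det : ℤ) : ZMod 2) := by
  unfold S
  have h1 : ∀ T : Finset (Fin n),
      ∏ i : Fin (n + 1), ((∑ k ∈ T, Fin.cons (α := fun _ => Fin n → ℤ) (l ⟨0, hn⟩) l i k : ℤ) : ZMod 2)
        = ∏ i : Fin n, ((∑ k ∈ T, l i k : ℤ) : ZMod 2) := by
    intro T
    rw [Fin.prod_univ_succ]
    simp only [Fin.cons_zero, Fin.cons_succ]
    rw [← Finset.mul_prod_erase Finset.univ (fun i : Fin n => ((∑ k ∈ T, l i k : ℤ) : ZMod 2))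
      (Finset.mem_univ ⟨0, hn⟩), ← mul_assoc, zmod2_mul_self]
  simp_rw [h1]
  have h2 : ∀ (i : Fin n) (T : Finset (Fin n)), ((∑ k ∈ T, l i k : ℤ) : ZMod 2)
      = ∑ k ∈ T, ((l i k : ℤ) : ZMod 2) := by
    intro i T; push_cast; rfl
  simp_rw [h2]
  rw [core (fun i k => ((l i k : ℤ) : ZMod 2))]
  rw [Matrix.det_apply', Matrix.det_apply']
  push_cast
  refine Finset.sum_congr rfl fun σ _ => ?_
  rw [sign_cast]
  simp

lemma eq_on_rep (n : ℕ) (hn : 1 ≤ n) (s s' : (Fin (n + 1) → (Fin n → ℤ)) → ZMod 2)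
    (hs2 : ∀ (v : Fin (n + 1) → Fin n → ℤ) (σ : Equiv.Perm (Fin (n + 1))), s (v ∘ σ) = s v)
    (hs3 : ∀ l : Fin n → (Fin n → ℤ),
      s (Fin.cons (l ⟨0, hn⟩) l) = (((Matrix.of fun i j => l j i).det : ℤ) : ZMod 2))
    (hs2' : ∀ (v : Fin (n + 1) → Fin n → ℤ) (σ : Equiv.Perm (Fin (n + 1))), s' (v ∘ σ) = s' v)
    (hs3' : ∀ l : Fin n → (Fin n → ℤ),
      s' (Fin.cons (l ⟨0, hn⟩) l) = (((Matrix.of fun i j => l j i).det : ℤ) : ZMod 2))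
    (v : Fin (n + 1) → Fin n → ℤ) (a b : Fin (n + 1)) (hab : a ≠ b) (hv : v a = v b) :
    s v = s' v := by
  have hv1 : (1 : Fin (n + 1)).val = 1 := by rw [Fin.val_one']; exact Nat.mod_eq_of_lt (by omega)
  have h01 : (0 : Fin (n + 1)) ≠ 1 := by
    rw [Fin.ne_iff_vne, hv1]
    simp
  set τ₁ : Equiv.Perm (Fin (n + 1)) := Equiv.swap 0 a with hτ₁
  set b₁ : Fin (n + 1) := τ₁ b with hb₁
  have hb₁0 : b₁ ≠ 0 := by
    intro h
    apply hab
    have : τ₁ b₁ = τ₁ 0 := by rw [h]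
    rw [hb₁, Equiv.swap_apply_self, Equiv.swap_apply_left] at this
    exact this.symm
  set τ₂ : Equiv.Perm (Fin (n + 1)) := Equiv.swap 1 b₁ with hτ₂
  set σ : Equiv.Perm (Fin (n + 1)) := τ₂.trans τ₁ with hσ
  have hσ' : ∀ x, σ x = τ₁ (τ₂ x) := fun x => rfl
  have hσ0 : σ 0 = a := by
    rw [hσ' 0, hτ₂, Equiv.swap_apply_of_ne_of_ne h01 (Ne.symm hb₁0), Equiv.swap_apply_left]
  have hσ1 : σ 1 = b := by
    rw [hσ' 1, hτ₂, Equiv.swap_apply_left, hb₁, Equiv.swap_apply_self]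
  set w : Fin (n + 1) → Fin n → ℤ := v ∘ σ with hw
  have hsucc : ((⟨0, hn⟩ : Fin n).succ : Fin (n + 1)) = 1 := by
    rw [Fin.ext_iff, hv1]
    simp
  have hwc : w = Fin.cons (Fin.tail w ⟨0, hn⟩) (Fin.tail w) := by
    funext i
    refine Fin.cases ?_ (fun i' => ?_) i
    · rw [Fin.cons_zero, Fin.tail, hsucc]
      show v (σ 0) = v (σ 1)
      rw [hσ0, hσ1, hv]
    · rw [Fin.cons_succ]
      rfl
  calc s v = s w := (hs2 v σ).symm
    _ = (((Matrix.of fun i j => Fin.tail w j i).det : ℤ) : ZMod 2) := by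
        rw [hwc]; exact hs3 (Fin.tail w)
    _ = s' w := by rw [hwc]; exact (hs3' (Fin.tail w)).symm
    _ = s' v := hs2' v σ

def toML (n : ℕ) (s : (Fin (n + 1) → (Fin n → ℤ)) → ZMod 2)
    (h1 : ∀ (v : Fin (n + 1) → Fin n → ℤ) (i : Fin (n + 1)) (x y : Fin n → ℤ),
      s (Function.update v i (x + y)) =
        s (Function.update v i x) + s (Function.update v i y)) :
    MultilinearMap ℤ (fun _ : Fin (n + 1) => (Fin n → ℤ)) (ZMod 2) where
  toFun := s
  map_update_add' := fun {dec} m i x y => by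
    have hd : dec = instDecidableEqFin (n + 1) := Subsingleton.elim _ _
    subst hd
    exact h1 m i x y
  map_update_smul' := fun {dec} m i c x => by
    have hd : dec = instDecidableEqFin (n + 1) := Subsingleton.elim _ _
    subst hd
    exact (AddMonoidHom.mk' (fun z => s (Function.update m i z))
      (fun x y => h1 m i x y)).map_zsmul c x



/-- There exists a unique multilinear (additive in each argument) symmetric map
`sgn : (ℤ^n)^(n+1) → ℤ/2ℤ` such that for all `l₁,…,lₙ ∈ ℤ^n` one has
`sgn(l₁,l₁,l₂,…,lₙ) ≡ det(l₁,l₂,…,lₙ) (mod 2)`. -/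
theorem stmt0 (n : ℕ) (hn : 1 ≤ n) :
    ∃! s : (Fin (n + 1) → (Fin n → ℤ)) → ZMod 2,
      (∀ (v : Fin (n + 1) → Fin n → ℤ) (i : Fin (n + 1)) (x y : Fin n → ℤ),
        s (Function.update v i (x + y)) =
          s (Function.update v i x) + s (Function.update v i y)) ∧
      (∀ (v : Fin (n + 1) → Fin n → ℤ) (σ : Equiv.Perm (Fin (n + 1))),
        s (v ∘ σ) = s v) ∧
      (∀ l : Fin n → (Fin n → ℤ),
        s (Fin.cons (l ⟨0, hn⟩) l) =
          (((Matrix.of fun i j => l j i).det : ℤ) : ZMod 2)) := by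
  refine ⟨S n, ⟨S_add n, S_symm n, S_det n hn⟩, ?_⟩
  rintro s ⟨h1, h2, h3⟩
  have key : toML n s h1 = toML n (S n) (S_add n) := by
    refine Module.Basis.ext_multilinear (fun _ => Pi.basisFun ℤ (Fin n)) fun j => ?_
    obtain ⟨a, b, hab, hj⟩ := Fintype.exists_ne_map_eq_of_card_lt j (by simp)
    exact eq_on_rep n hn s (S n) h2 h3 (S_symm n) (S_det n hn) _ a b hab (by rw [hj])
  funext v
  exact DFunLike.congr_fun key v
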